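/- arXiv:hep-th/0301119 — 2 statements merged into one kernel-verified Lean document; each statement's English description precedes it below -/
import Mathlib

section
/- Writing A = 2n + 1 - nT₊ - T₋n where (nλ)_n = nλ_n, (T₊λ)_n = λ_{n-1} (with (T₊λ)_0 = 0), and (T₋λ)_n = λ_{n+1}, and defining K = (i/2)(nT₊ - T₋n), the commutator satisfies i[A, K] = A on finitely supported sequences. -/
open Complex

/-- The number operator `(nλ)_n = n λ_n`. -/
noncomputable def Nop (l : ℕ → ℂ) (n : ℕ) : ℂ := n * l n

/-- The right shift `(T₊λ)_n = λ_{n-1}`, with `(T₊λ)_0 = 0`. -/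
noncomputable def Tplus (l : ℕ → ℂ) (n : ℕ) : ℂ := if n = 0 then 0 else l (n - 1)

/-- The left shift `(T₋λ)_n = λ_{n+1}`. -/
noncomputable def Tminus (l : ℕ → ℂ) (n : ℕ) : ℂ := l (n + 1)

/-- `A = 2n + 1 - n T₊ - T₋ n`. -/
noncomputable def Aop (l : ℕ → ℂ) (n : ℕ) : ℂ :=
  2 * Nop l n + l n - Nop (Tplus l) n - Tminus (Nop l) n

/-- `K = (i/2)(n T₊ - T₋ n)`. -/
noncomputable def Kop (l : ℕ → ℂ) (n : ℕ) : ℂ :=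
  (I / 2) * (Nop (Tplus l) n - Tminus (Nop l) n)

/-- The positive commutator identity `i[A, K] = A` on finitely supported sequences. -/
theorem commutator_AK (l : ℕ → ℂ) (hfin : ∃ N, ∀ n, N ≤ n → l n = 0) (n : ℕ) :
    I * (Aop (Kop l) n - Kop (Aop l) n) = Aop l n := by
  simp only [Aop, Kop, Nop, Tplus, Tminus]
  rcases n with _ | _ | n <;>
    simp only [Nat.succ_ne_zero, if_false, if_true, Nat.add_sub_cancel, Nat.cast_zero,
      Nat.cast_add, Nat.cast_one, Nat.cast_ofNat, zero_mul, mul_zero, reduceIte] <;>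
    push_cast <;>
    have h := I_sq <;>
    ring_nf <;>
    rw [h] <;> ring
end

section
/- For every fixed x ∈ ℂ, lim_{n→∞} L_n(x²/(4n)) = J₀(x), where L_n is the n-th Laguerre polynomial L_n(κ) = Σ_{k=0}^n ((-κ)^k/k!) C(n,k) and J₀(x) = Σ_{k=0}^∞ (-x²/4)^k/(k!)² is the Bessel function of order zero. -/
open Finset Filter

/-- The Laguerre polynomial `L_n(κ) = Σ_{k=0}^n ((-κ)^k/k!) C(n,k)`. -/
noncomputable def Lag (n : ℕ) (κ : ℂ) : ℂ :=
  ∑ k ∈ range (n + 1), (-κ) ^ k / (k.factorial : ℂ) * (n.choose k : ℂ)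

/-- The Bessel function of order zero, `J₀(x) = Σ_{k=0}^∞ (-x²/4)^k/(k!)²`. -/
noncomputable def J0 (x : ℂ) : ℂ :=
  ∑' k : ℕ, (-x ^ 2 / 4) ^ k / ((k.factorial : ℂ) ^ 2)

lemma descFactorial_div_pow_tendsto (k : ℕ) :
    Tendsto (fun n : ℕ => (n.descFactorial k : ℝ) / (n : ℝ) ^ k) atTop (nhds 1) := by
  have h : ∀ᶠ n : ℕ in atTop, (n.descFactorial k : ℝ) / (n : ℝ) ^ k
      = ∏ i ∈ range k, (1 - (i : ℝ) / n) := by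
    filter_upwards [eventually_ge_atTop k, eventually_ge_atTop 1] with n hn h1
    have hn0 : (n : ℝ) ≠ 0 := by positivity
    rw [Nat.descFactorial_eq_prod_range, Nat.cast_prod]
    have hpow : (n : ℝ) ^ k = ∏ _i ∈ range k, (n : ℝ) := by simp
    rw [hpow, ← Finset.prod_div_distrib]
    refine Finset.prod_congr rfl fun i hi => ?_
    have hik : i ≤ n := le_trans (le_of_lt (Finset.mem_range.mp hi)) hn
    rw [Nat.cast_sub hik, sub_div, div_self hn0]
  have : Tendsto (fun n : ℕ => ∏ i ∈ range k, (1 - (i : ℝ) / n)) atTop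
      (nhds (∏ i ∈ range k, (1 : ℝ))) := by
    refine tendsto_finset_prod _ fun i _ => ?_
    simpa using (tendsto_const_nhds (x := (1:ℝ))).sub
      (tendsto_const_div_atTop_nhds_zero_nat (i : ℝ))
  rw [Finset.prod_const_one] at this
  exact this.congr' (Filter.EventuallyEq.symm h)

/-- For every fixed `x ∈ ℂ`, `lim_{n→∞} L_n(x²/(4n)) = J₀(x)`. -/
theorem laguerre_tendsto_besselJ0 (x : ℂ) :
    Tendsto (fun n : ℕ => Lag n (x ^ 2 / (4 * n))) atTop (nhds (J0 x)) := by
  set f : ℕ → ℕ → ℂ := fun n k =>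
    if k ≤ n then (-(x ^ 2 / (4 * n))) ^ k / (k.factorial : ℂ) * (n.choose k : ℂ) else 0 with hf
  have key : Tendsto (fun n => ∑' k, f n k) atTop (nhds (J0 x)) := by
    unfold J0
    refine tendsto_tsum_of_dominated_convergence
      (bound := fun k => ‖x ^ 2 / 4‖ ^ k / (k.factorial : ℝ) ^ 2) ?_ ?_ ?_
    · -- summability
      refine Summable.of_nonneg_of_le (fun k => by positivity)
        (fun k => ?_) (Real.summable_pow_div_factorial ‖x ^ 2 / 4‖)
      have hk1 : (1 : ℝ) ≤ (k.factorial : ℝ) := by exact_mod_cast k.factorial_pos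
      calc ‖x ^ 2 / 4‖ ^ k / (k.factorial : ℝ) ^ 2
          ≤ ‖x ^ 2 / 4‖ ^ k / (k.factorial : ℝ) := by
            apply div_le_div_of_nonneg_left (by positivity) (by positivity)
            nlinarith
        _ = ‖x ^ 2 / 4‖ ^ k / (k.factorial : ℝ) := rfl
    · -- pointwise convergence
      intro k
      have heq : ∀ᶠ n : ℕ in atTop, f n k
          = (-x ^ 2 / 4) ^ k / (k.factorial : ℂ) ^ 2 * ((n.descFactorial k : ℝ) / (n : ℝ) ^ k : ℝ) := by
        filter_upwards [eventually_ge_atTop k, eventually_ge_atTop 1] with n hn h1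
        have hn0 : (n : ℂ) ≠ 0 := by exact_mod_cast Nat.cast_ne_zero.mpr (by omega)
        have hk0 : (k.factorial : ℂ) ≠ 0 := by exact_mod_cast k.factorial_ne_zero
        have hd : (n.descFactorial k : ℂ) = (k.factorial : ℂ) * (n.choose k : ℂ) := by
          exact_mod_cast congrArg (Nat.cast : ℕ → ℂ)
            (Nat.descFactorial_eq_factorial_mul_choose n k)
        simp only [hf, if_pos hn]
        push_cast
        rw [hd]
        field_simp
        ring_nf
        rw [mul_assoc (x ^ (k * 2)) ((n : ℂ) ^ k), ← mul_pow, mul_inv_cancel₀ hn0, one_pow, mul_one]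
      have hlim := descFactorial_div_pow_tendsto k
      have : Tendsto (fun n : ℕ =>
          (-x ^ 2 / 4) ^ k / (k.factorial : ℂ) ^ 2 * ((n.descFactorial k : ℝ) / (n : ℝ) ^ k : ℝ))
          atTop (nhds ((-x ^ 2 / 4) ^ k / (k.factorial : ℂ) ^ 2)) := by
        have := ((Complex.continuous_ofReal.tendsto 1).comp hlim).const_mul
          ((-x ^ 2 / 4) ^ k / (k.factorial : ℂ) ^ 2)
        simpa using this
      exact this.congr' (Filter.EventuallyEq.symm heq)
    · -- domination
      filter_upwards [eventually_ge_atTop 1] with n hn k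
      by_cases hk : k ≤ n
      · have hn0 : (0 : ℝ) < (n : ℝ) := by exact_mod_cast hn
        have h1 : ‖(-(x ^ 2 / (4 * (n : ℂ))))‖ = ‖x ^ 2 / 4‖ / n := by
          rw [norm_neg, norm_div, norm_div, norm_mul, ← div_div]
          norm_num
        simp only [hf, if_pos hk]
        rw [norm_mul, norm_div, norm_pow, h1, Complex.norm_natCast, Complex.norm_natCast]
        have hbound : (n.choose k : ℝ) ≤ (n : ℝ) ^ k / (k.factorial : ℝ) :=
          Nat.choose_le_pow_div k n
        calc (‖x ^ 2 / 4‖ / n) ^ k / (k.factorial : ℝ) * (n.choose k : ℝ)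
            ≤ (‖x ^ 2 / 4‖ / n) ^ k / (k.factorial : ℝ) * ((n : ℝ) ^ k / (k.factorial : ℝ)) := by
              apply mul_le_mul_of_nonneg_left hbound (by positivity)
          _ = ‖x ^ 2 / 4‖ ^ k / (k.factorial : ℝ) ^ 2 := by
              rw [div_pow]
              field_simp
      · simp only [hf, if_neg hk, norm_zero]
        positivity
  refine key.congr (fun n => ?_)
  rw [Lag, tsum_eq_sum (s := range (n + 1)) (f := f n)]
  · refine Finset.sum_congr rfl fun k hk => ?_
    have : k ≤ n := Nat.lt_succ_iff.mp (Finset.mem_range.mp hk)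
    simp [hf, this]
  · intro k hk
    have : ¬ k ≤ n := by
      simp only [Finset.mem_range, Nat.lt_succ_iff] at hk
      exact hk
    simp [hf, this]
end
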